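/- For every lattice function f : ℤⁿ → Cl_{0,n} and each sign choice, D_h^±((mh)·f) = −2·V_{h,n/2}^± f − (mh)·(D_h^± f), where (mh)·f is pointwise left multiplication by the Clifford vector mh and V_{h,n/2}^± = (n/2)·I + E_h^± − A_h^± + (1/2)·B_h^±. -/

import Mathlib

open Finset

noncomputable section

/-- The quadratic form on `ℝⁿ` whose Clifford algebra is `Cl_{0,n}`:
`Q(x) = −(x₁² + ⋯ + xₙ²)`, so that the generators satisfy `eᵢeⱼ + eⱼeᵢ = −2δᵢⱼ`. -/
def negQ (n : ℕ) : QuadraticForm ℝ (Fin n → ℝ) :=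
  QuadraticMap.weightedSumSquares ℝ (fun _ : Fin n => (-1 : ℝ))

/-- The Clifford algebra `Cl_{0,n}`. -/
abbrev Cl (n : ℕ) := CliffordAlgebra (negQ n)

/-- The generators `e i` of `Cl_{0,n}`. -/
def eCl (n : ℕ) (i : Fin n) : Cl n := CliffordAlgebra.ι (negQ n) (Pi.single i 1)

/-- `1` for the forward (upper sign) choice, `-1` for the backward one. -/
def sgn (σ : Bool) : ℝ := if σ then 1 else -1

/-- Forward/backward difference `∂_h^{±i}` of a lattice function with values in a real module. -/
def fdiff {n : ℕ} {A : Type*} [AddCommGroup A] [Module ℝ A] (σ : Bool) (h : ℝ) (i : Fin n)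
    (f : (Fin n → ℤ) → A) : (Fin n → ℤ) → A := fun m =>
  if σ then h⁻¹ • (f (m + Pi.single i 1) - f m) else h⁻¹ • (f m - f (m - Pi.single i 1))

/-- `m ∓ εᵢ` (upper sign paired with the forward difference). -/
def shiftB {n : ℕ} (σ : Bool) (i : Fin n) (m : Fin n → ℤ) : Fin n → ℤ :=
  if σ then m - Pi.single i 1 else m + Pi.single i 1

/-- One-dimensional factorial power `(x)_∓^{(s)} = ∏_{k=0}^{s-1} (x ∓ k h)`
(upper sign paired with the forward difference `σ = true`). -/
def factPow (σ : Bool) (h x : ℝ) (s : ℕ) : ℝ :=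
  ∏ k ∈ range s, (x - sgn σ * k * h)

/-- Multi-index factorial power `(mh)_∓^{(α)}`. -/
def mfp {n : ℕ} (σ : Bool) (h : ℝ) (m : Fin n → ℤ) (α : Fin n → ℕ) : ℝ :=
  ∏ i, factPow σ h (m i * h) (α i)

/-- The difference Dirac operator `D_h^± = Σᵢ eᵢ ∂_h^{±i}`. -/
def Dirac (n : ℕ) (σ : Bool) (h : ℝ) (f : (Fin n → ℤ) → Cl n) : (Fin n → ℤ) → Cl n :=
  fun m => ∑ i, eCl n i * fdiff σ h i f m

/-- The Clifford vector `mh = Σᵢ (mᵢ h) eᵢ`. -/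
def vecCl (n : ℕ) (h : ℝ) (m : Fin n → ℤ) : Cl n := ∑ i, ((m i : ℝ) * h) • eCl n i

/-- The difference Euler operator `(E_h^± f)(m) = Σᵢ (mᵢ h) (∂_h^{±i} f)(m ∓ εᵢ)`. -/
def Euler (n : ℕ) (σ : Bool) (h : ℝ) (f : (Fin n → ℤ) → Cl n) : (Fin n → ℤ) → Cl n :=
  fun m => ∑ i, ((m i : ℝ) * h) • fdiff σ h i f (shiftB σ i m)

/-- The second-order operator `(A_h^± f)(m) = ∓ h Σᵢ (mᵢ h) (∂_h^{±i} ∂_h^{∓i} f)(m)`. -/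
def Aop (n : ℕ) (σ : Bool) (h : ℝ) (f : (Fin n → ℤ) → Cl n) : (Fin n → ℤ) → Cl n :=
  fun m => (-(sgn σ) * h) • ∑ i, ((m i : ℝ) * h) • fdiff σ h i (fdiff (!σ) h i f) m

/-- `L_{jk}^± f = (mⱼ h) ∂_h^{±k} f − (m_k h) ∂_h^{±j} f`. -/
def Lop (n : ℕ) (σ : Bool) (h : ℝ) (j k : Fin n) (f : (Fin n → ℤ) → Cl n) :
    (Fin n → ℤ) → Cl n :=
  fun m => ((m j : ℝ) * h) • fdiff σ h k f m - ((m k : ℝ) * h) • fdiff σ h j f m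

/-- The difference Gamma operator `Γ_h^± f = −Σ_{j<k} eⱼ e_k L_{jk}^± f − A_h^± f`. -/
def Gamma (n : ℕ) (σ : Bool) (h : ℝ) (f : (Fin n → ℤ) → Cl n) : (Fin n → ℤ) → Cl n :=
  fun m => -(∑ j, ∑ k, if j < k then eCl n j * eCl n k * Lop n σ h j k f m else 0)
    - Aop n σ h f m

/-- `B_h^± = ±h Σᵢ ∂_h^{±i}`. -/
def Bop (n : ℕ) (σ : Bool) (h : ℝ) (f : (Fin n → ℤ) → Cl n) : (Fin n → ℤ) → Cl n :=
  fun m => (sgn σ * h) • ∑ i, fdiff σ h i f m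

/-- `(C_h^± f)(m) = Σᵢ (mᵢ h) eᵢ f(m ∓ εᵢ)`. -/
def Cop (n : ℕ) (σ : Bool) (h : ℝ) (f : (Fin n → ℤ) → Cl n) : (Fin n → ℤ) → Cl n :=
  fun m => ∑ i, ((m i : ℝ) * h) • (eCl n i * f (shiftB σ i m))

/-- `V_{h,r}^± = r I + E_h^± − A_h^± + (1/2) B_h^±`. -/
def Vop (n : ℕ) (σ : Bool) (h r : ℝ) (f : (Fin n → ℤ) → Cl n) : (Fin n → ℤ) → Cl n :=
  fun m => r • f m + Euler n σ h f m - Aop n σ h f m + (1/2 : ℝ) • Bop n σ h f m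

/-- `Π_k^±`: the real span of the lattice functions `m ↦ (mh)_∓^{(α)} a` with `|α| ≤ k`. -/
def PiLe (n : ℕ) (σ : Bool) (h : ℝ) (k : ℕ) : Submodule ℝ ((Fin n → ℤ) → Cl n) :=
  Submodule.span ℝ {f | ∃ (α : Fin n → ℕ) (a : Cl n),
    (∑ i, α i) ≤ k ∧ f = fun m => mfp σ h m α • a}

/-- The space of homogeneous discrete polynomials of degree exactly `k`:
the real span of the lattice functions `m ↦ (mh)_∓^{(α)} a` with `|α| = k`. -/
def PiEq (n : ℕ) (σ : Bool) (h : ℝ) (k : ℕ) : Submodule ℝ ((Fin n → ℤ) → Cl n) :=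
  Submodule.span ℝ {f | ∃ (α : Fin n → ℕ) (a : Cl n),
    (∑ i, α i) = k ∧ f = fun m => mfp σ h m α • a}


section Aux

lemma negQ_single (n : ℕ) (i : Fin n) : negQ n (Pi.single i 1) = -1 := by
  simp [negQ, QuadraticMap.weightedSumSquares_apply, Pi.single_apply]

lemma eCl_sq (n : ℕ) (i : Fin n) : eCl n i * eCl n i = -1 := by
  rw [eCl, CliffordAlgebra.ι_sq_scalar]
  rw [negQ_single, map_neg, map_one]

lemma eCl_anti (n : ℕ) (i j : Fin n) (hij : i ≠ j) :
    eCl n i * eCl n j = -(eCl n j * eCl n i) := by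
  have key : QuadraticMap.polar (⇑(negQ n)) (Pi.single i 1) (Pi.single j 1) = 0 := by
    simp only [QuadraticMap.polar, negQ_single]
    have h2 : negQ n (Pi.single i 1 + Pi.single j 1) = -2 := by
      simp only [negQ, QuadraticMap.weightedSumSquares_apply, Pi.add_apply, Pi.single_apply,
        smul_eq_mul]
      have hpt : ∀ x : Fin n, (-1 : ℝ) * (((if x = i then 1 else 0) + if x = j then 1 else 0) *
          ((if x = i then 1 else 0) + if x = j then 1 else 0))
          = -(if x = i then 1 else 0) - (if x = j then 1 else 0) := by
        intro x
        rcases eq_or_ne x i with rfl | hxi <;> rcases eq_or_ne x j with rfl | hxj <;>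
          simp_all
      rw [Finset.sum_congr rfl fun x _ => hpt x]
      simp [Finset.sum_sub_distrib]
      norm_num
    rw [h2]; ring
  have h3 := CliffordAlgebra.ι_mul_ι_add_swap (Q := negQ n) (Pi.single i 1) (Pi.single j 1)
  rw [key] at h3
  simp at h3
  exact eq_neg_of_add_eq_zero_left h3

lemma vec_add (n : ℕ) (h : ℝ) (i : Fin n) (m : Fin n → ℤ) :
    vecCl n h (m + Pi.single i 1) = vecCl n h m + h • eCl n i := by
  simp only [vecCl, Pi.add_apply, Pi.single_apply, Int.cast_add, add_mul, add_smul,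
    Finset.sum_add_distrib]
  congr 1
  simp [Int.cast_ite, ite_mul, ite_smul, Finset.sum_ite_eq']

lemma vec_sub (n : ℕ) (h : ℝ) (i : Fin n) (m : Fin n → ℤ) :
    vecCl n h (m - Pi.single i 1) = vecCl n h m - h • eCl n i := by
  simp only [vecCl, Pi.sub_apply, Pi.single_apply, Int.cast_sub, sub_mul, sub_smul,
    Finset.sum_sub_distrib]
  congr 1
  simp [Int.cast_ite, ite_mul, ite_smul, Finset.sum_ite_eq']

lemma fdiff_vec_mul (n : ℕ) (h : ℝ) (hh : h ≠ 0) (σ : Bool) (i : Fin n)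
    (f : (Fin n → ℤ) → Cl n) (m : Fin n → ℤ) :
    fdiff σ h i (fun m => vecCl n h m * f m) m
      = vecCl n h m * fdiff σ h i f m + eCl n i * f (shiftB (!σ) i m) := by
  cases σ <;>
    simp only [fdiff, shiftB, Bool.not_true, Bool.not_false, Bool.false_eq_true,
      Bool.true_eq_false, if_true, if_false, vec_add, vec_sub,
      add_mul, sub_mul, smul_mul_assoc, mul_smul_comm, mul_sub] <;>
    match_scalars <;> field_simp

lemma eCl_mul_vec (n : ℕ) (h : ℝ) (i : Fin n) (m : Fin n → ℤ) :
    eCl n i * vecCl n h m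
      = -(vecCl n h m * eCl n i) - (2 * ((m i : ℝ) * h)) • 1 := by
  have hpt : ∀ j : Fin n, ((m j : ℝ) * h) • (eCl n i * eCl n j)
      = (if j = i then (-(2 * ((m i : ℝ) * h))) • (1 : Cl n) else 0)
        - ((m j : ℝ) * h) • (eCl n j * eCl n i) := by
    intro j
    rcases eq_or_ne j i with rfl | hji
    · rw [if_pos rfl, eCl_sq]
      module
    · rw [if_neg hji, eCl_anti n i j (Ne.symm hji)]
      module
  rw [vecCl, Finset.mul_sum]
  simp only [mul_smul_comm]
  rw [Finset.sum_congr rfl fun j _ => hpt j, Finset.sum_sub_distrib]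
  rw [Finset.sum_ite_eq' Finset.univ i fun _ => (-(2 * ((m i : ℝ) * h))) • (1 : Cl n)]
  simp only [Finset.mem_univ, if_true, Finset.sum_mul, smul_mul_assoc]
  module

lemma key_scalar (n : ℕ) (h : ℝ) (hh : h ≠ 0) (σ : Bool) (i : Fin n)
    (f : (Fin n → ℤ) → Cl n) (m : Fin n → ℤ) :
    (2 * ((m i : ℝ) * h)) • fdiff σ h i f m + f (shiftB (!σ) i m)
      = f m + (2 * ((m i : ℝ) * h)) • fdiff σ h i f (shiftB σ i m)
        + (2 * sgn σ * h * ((m i : ℝ) * h)) • fdiff σ h i (fdiff (!σ) h i f) m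
        + (sgn σ * h) • fdiff σ h i f m := by
  cases σ <;>
    simp only [fdiff, shiftB, sgn, Bool.not_true, Bool.not_false, Bool.false_eq_true,
      Bool.true_eq_false, if_true, if_false,
      sub_add_cancel, add_sub_cancel_right, smul_sub, smul_add] <;>
    match_scalars <;> field_simp <;> ring

lemma master (n : ℕ) (h : ℝ) (hh : h ≠ 0) (σ : Bool) (i : Fin n)
    (f : (Fin n → ℤ) → Cl n) (m : Fin n → ℤ) :
    eCl n i * fdiff σ h i (fun m => vecCl n h m * f m) m
      = -(vecCl n h m * (eCl n i * fdiff σ h i f m)) - f m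
        - (2 * ((m i : ℝ) * h)) • fdiff σ h i f (shiftB σ i m)
        - (2 * sgn σ * h * ((m i : ℝ) * h)) • fdiff σ h i (fdiff (!σ) h i f) m
        - (sgn σ * h) • fdiff σ h i f m := by
  have hk : f (shiftB (!σ) i m)
      = f m + (2 * ((m i : ℝ) * h)) • fdiff σ h i f (shiftB σ i m)
        + (2 * sgn σ * h * ((m i : ℝ) * h)) • fdiff σ h i (fdiff (!σ) h i f) m
        + (sgn σ * h) • fdiff σ h i f m
        - (2 * ((m i : ℝ) * h)) • fdiff σ h i f m := by
    rw [eq_sub_iff_add_eq, add_comm]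
    exact key_scalar n h hh σ i f m
  rw [fdiff_vec_mul n h hh σ i f m, mul_add, ← mul_assoc, ← mul_assoc, eCl_mul_vec, eCl_sq, hk]
  have hassoc : eCl n i * vecCl n h m * fdiff σ h i f m
      = eCl n i * (vecCl n h m * fdiff σ h i f m) := by rw [mul_assoc]
  simp only [sub_mul, neg_mul, smul_mul_assoc, one_mul, mul_assoc, neg_one_mul]
  module

end Aux

/-- Proposition 3.2: `D_h^±((mh) f) = −2 V_{h,n/2}^± f − (mh) D_h^± f`. -/
theorem dirac_vec_mul (n : ℕ) (hn : 1 ≤ n) (h : ℝ) (hh : 0 < h) (σ : Bool)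
    (f : (Fin n → ℤ) → Cl n) :
    Dirac n σ h (fun m => vecCl n h m * f m)
      = fun m => (-2 : ℝ) • Vop n σ h ((n : ℝ) / 2) f m - vecCl n h m * Dirac n σ h f m := by
  have hne : h ≠ 0 := ne_of_gt hh
  funext m
  simp only [Dirac, Vop, Euler, Aop, Bop]
  rw [Finset.sum_congr rfl fun i _ => master n h hne σ i f m]
  have hconst : ((n : ℝ) / 2) • f m = ∑ _i : Fin n, (1/2 : ℝ) • f m := by
    rw [Finset.sum_const, Finset.card_univ, Fintype.card_fin, ← Nat.cast_smul_eq_nsmul ℝ,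
      smul_smul]
    congr 1
    ring
  rw [hconst, Finset.mul_sum]
  simp only [smul_add, smul_sub, Finset.smul_sum]
  rw [← Finset.sum_add_distrib, ← Finset.sum_sub_distrib, ← Finset.sum_add_distrib,
    ← Finset.sum_sub_distrib]
  exact Finset.sum_congr rfl fun i _ => by module
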